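/- arXiv:1802.05071 — 2 statements merged into one kernel-verified Lean document; each statement's English description precedes it below -/
import Mathlib

section
/- Let β > 0 and set γ_n = (2n)^{−β/(2√2)}·exp(√2·β·n). Then for every x > 0, ⌊e^n⌋·P(exp(β√n·ξ) > γ_n·x) → (1/√(2π))·x^{−√2/β} as n → ∞, where ξ is standard normal. -/
open MeasureTheory ProbabilityTheory Filter Real

private lemma hd1 (y : ℝ) : HasDerivAt (fun u : ℝ => -Real.exp (-u^2/2)) (y * Real.exp (-y^2/2)) y := by
  have h : HasDerivAt (fun u : ℝ => -u^2/2) (-y) y := by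
    have := ((hasDerivAt_pow 2 y).neg.div_const 2)
    refine this.congr_deriv ?_
    push_cast
    ring
  have := h.exp.neg
  refine this.congr_deriv ?_
  ring

private lemma hd2 (y : ℝ) (hy : y ≠ 0) :
    HasDerivAt (fun u : ℝ => -Real.exp (-u^2/2) * u⁻¹) ((1 + (y^2)⁻¹) * Real.exp (-y^2/2)) y := by
  have := (hd1 y).mul (hasDerivAt_inv hy)
  refine this.congr_deriv ?_
  field_simp

private lemma exp_sq_tendsto : Tendsto (fun u : ℝ => Real.exp (-u^2/2)) atTop (nhds 0) := by
  have h1 : Tendsto (fun u : ℝ => u^2/2) atTop atTop :=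
    (tendsto_pow_atTop two_ne_zero).atTop_div_const (by norm_num)
  have := Real.tendsto_exp_neg_atTop_nhds_zero.comp h1
  convert this using 2 with u
  simp [Function.comp]
  ring_nf

private lemma int1 (t : ℝ) (ht : 0 < t) :
    ∫ y in Set.Ioi t, y * Real.exp (-y^2/2) = Real.exp (-t^2/2) := by
  have hnn : ∀ y ∈ Set.Ioi t, 0 ≤ y * Real.exp (-y^2/2) := fun y hy => by
    have : 0 < y := lt_trans ht hy
    positivity
  have htend : Tendsto (fun u : ℝ => -Real.exp (-u^2/2)) atTop (nhds 0) := by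
    simpa using exp_sq_tendsto.neg
  have key := integral_Ioi_of_hasDerivAt_of_nonneg' (fun y _ => hd1 y) hnn htend
  simpa using key

private lemma int1_integrable (t : ℝ) (ht : 0 < t) :
    IntegrableOn (fun y => y * Real.exp (-y^2/2)) (Set.Ioi t) := by
  have hnn : ∀ y ∈ Set.Ioi t, 0 ≤ y * Real.exp (-y^2/2) := fun y hy => by
    have : 0 < y := lt_trans ht hy
    positivity
  have htend : Tendsto (fun u : ℝ => -Real.exp (-u^2/2)) atTop (nhds 0) := by
    simpa using exp_sq_tendsto.neg
  exact integrableOn_Ioi_deriv_of_nonneg' (fun y _ => hd1 y) hnn htend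

private lemma int2 (t : ℝ) (ht : 0 < t) :
    ∫ y in Set.Ioi t, (1 + (y^2)⁻¹) * Real.exp (-y^2/2) = Real.exp (-t^2/2) / t := by
  have hnn : ∀ y ∈ Set.Ioi t, 0 ≤ (1 + (y^2)⁻¹) * Real.exp (-y^2/2) := fun y hy => by
    have : 0 < y := lt_trans ht hy
    positivity
  have htend : Tendsto (fun u : ℝ => -Real.exp (-u^2/2) * u⁻¹) atTop (nhds 0) := by
    have := exp_sq_tendsto.neg.mul tendsto_inv_atTop_zero
    simpa using this
  have key := integral_Ioi_of_hasDerivAt_of_nonneg'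
    (fun y (hy : y ∈ Set.Ici t) => hd2 y (ne_of_gt (lt_of_lt_of_le ht hy))) hnn htend
  rw [key]
  field_simp
  ring

private lemma int2_integrable (t : ℝ) (ht : 0 < t) :
    IntegrableOn (fun y => (1 + (y^2)⁻¹) * Real.exp (-y^2/2)) (Set.Ioi t) := by
  have hnn : ∀ y ∈ Set.Ioi t, 0 ≤ (1 + (y^2)⁻¹) * Real.exp (-y^2/2) := fun y hy => by
    have : 0 < y := lt_trans ht hy
    positivity
  have htend : Tendsto (fun u : ℝ => -Real.exp (-u^2/2) * u⁻¹) atTop (nhds 0) := by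
    have := exp_sq_tendsto.neg.mul tendsto_inv_atTop_zero
    simpa using this
  exact integrableOn_Ioi_deriv_of_nonneg'
    (fun y (hy : y ∈ Set.Ici t) => hd2 y (ne_of_gt (lt_of_lt_of_le ht hy))) hnn htend

private lemma exp_integrableOn (t : ℝ) :
    IntegrableOn (fun y : ℝ => Real.exp (-y^2/2)) (Set.Ioi t) := by
  have h : Integrable (fun y : ℝ => Real.exp (-(1/2) * y^2)) :=
    integrable_exp_neg_mul_sq (by norm_num)
  have he : (fun y : ℝ => Real.exp (-(1/2) * y^2)) = fun y : ℝ => Real.exp (-y^2/2) := by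
    funext y; congr 1; ring
  rw [he] at h
  exact h.integrableOn

private lemma tail_upper (t : ℝ) (ht : 0 < t) :
    (∫ y in Set.Ioi t, Real.exp (-y^2/2)) ≤ Real.exp (-t^2/2) / t := by
  rw [le_div_iff₀ ht]
  have h1 : (∫ y in Set.Ioi t, Real.exp (-y^2/2)) * t = ∫ y in Set.Ioi t, t * Real.exp (-y^2/2) := by
    rw [integral_const_mul, mul_comm]
  rw [h1, ← int1 t ht]
  apply setIntegral_mono_on ((exp_integrableOn t).const_mul t) (int1_integrable t ht)
    measurableSet_Ioi
  intro y hy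
  exact mul_le_mul_of_nonneg_right (le_of_lt hy) (Real.exp_pos _).le

private lemma tail_lower (t : ℝ) (ht : 0 < t) :
    t / (1 + t^2) * Real.exp (-t^2/2) ≤ ∫ y in Set.Ioi t, Real.exp (-y^2/2) := by
  have h1 : Real.exp (-t^2/2)/t ≤ (1 + (t^2)⁻¹) * ∫ y in Set.Ioi t, Real.exp (-y^2/2) := by
    rw [← int2 t ht, ← integral_const_mul]
    apply setIntegral_mono_on (int2_integrable t ht) ((exp_integrableOn t).const_mul _)
      measurableSet_Ioi
    intro y hy
    have hty : 0 < y := lt_trans ht hy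
    have hinv : (y^2)⁻¹ ≤ (t^2)⁻¹ := by
      apply inv_anti₀ (by positivity)
      nlinarith [le_of_lt (Set.mem_Ioi.mp hy)]
    nlinarith [Real.exp_pos (-y^2/2)]
  have h2 : (0:ℝ) < 1 + (t^2)⁻¹ := by positivity
  have h3 : t / (1 + t^2) * Real.exp (-t^2/2) = (Real.exp (-t^2/2)/t) / (1 + (t^2)⁻¹) := by
    field_simp
    ring
  rw [h3, div_le_iff₀ h2]
  linarith [h1]

private lemma gauss_Ioi (t : ℝ) :
    ((gaussianReal 0 1) (Set.Ioi t)).toReal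
      = (Real.sqrt (2*Real.pi))⁻¹ * ∫ y in Set.Ioi t, Real.exp (-y^2/2) := by
  rw [gaussianReal_apply_eq_integral 0 one_ne_zero,
    ENNReal.toReal_ofReal (setIntegral_nonneg measurableSet_Ioi
      (fun y _ => gaussianPDFReal_nonneg 0 1 y))]
  have h : ∀ y : ℝ, gaussianPDFReal 0 1 y = (Real.sqrt (2*Real.pi))⁻¹ * Real.exp (-y^2/2) := by
    intro y
    simp [gaussianPDFReal]
  simp_rw [h]
  rw [integral_const_mul]

private lemma sqrt_tendsto_atTop : Tendsto Real.sqrt atTop atTop := by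
  refine (tendsto_rpow_atTop (by norm_num : (0:ℝ) < 1/2)).congr' ?_
  filter_upwards [eventually_ge_atTop (0:ℝ)] with y hy
  rw [Real.sqrt_eq_rpow]

private lemma exponent_identity (r s X L β N : ℝ) (hr : r * r = 2) (hs : s * s = N)
    (hs0 : s ≠ 0) (hr0 : r ≠ 0) (hβ : β ≠ 0) :
    -(r*s + (X/β - L/(2*r))/s)^2/2
      = -N + (L/2 + (X * (-r/β) + -((X/β - L/(2*r))^2/(2*N)))) := by
  rw [← hs]
  field_simp
  ring_nf
  linear_combination (-4*r^2*β^2*s^4) * hr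

/-- For `β > 0` and `γ_n = (2n)^{−β/(2√2)}·exp(√2βn)`, for every `x > 0`,
`⌊e^n⌋·P(exp(β√n·ξ) > γ_n·x) → (1/√(2π))·x^{−√2/β}` as `n → ∞`. -/
theorem exceedance_count_limit (β : ℝ) (hβ : 0 < β) (x : ℝ) (hx : 0 < x) :
    Tendsto (fun n : ℕ =>
        (⌊Real.exp n⌋ : ℝ) *
          ((gaussianReal 0 1)
            {y : ℝ | Real.exp (β * Real.sqrt n * y) >
              ((2 * n : ℝ) ^ (-β / (2 * Real.sqrt 2)) * Real.exp (Real.sqrt 2 * β * n)) * x}).toReal)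
      atTop
      (nhds ((1 / Real.sqrt (2 * Real.pi)) * x ^ (-Real.sqrt 2 / β))) := by
  have hβ' : β ≠ 0 := ne_of_gt hβ
  have hr2 : (0:ℝ) < Real.sqrt 2 := by positivity
  have h22 : Real.sqrt 2 * Real.sqrt 2 = 2 := Real.mul_self_sqrt (by norm_num)
  set c : ℕ → ℝ := fun n => Real.log x / β - Real.log (2*(n:ℝ)) / (2*Real.sqrt 2) with hcdef
  set t : ℕ → ℝ := fun n =>
    Real.log (((2 * (n:ℝ)) ^ (-β / (2 * Real.sqrt 2)) * Real.exp (Real.sqrt 2 * β * n)) * x)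
      / (β * Real.sqrt n) with htdef
  -- basic per-n facts
  have htT : ∀ n : ℕ, 1 ≤ n → t n = Real.sqrt 2 * Real.sqrt n + c n / Real.sqrt n := by
    intro n hn
    have hn0 : (0:ℝ) < (n:ℝ) := by exact_mod_cast hn
    have h2n : (0:ℝ) < 2 * (n:ℝ) := by positivity
    have hlog : Real.log (((2 * (n:ℝ)) ^ (-β / (2 * Real.sqrt 2))
          * Real.exp (Real.sqrt 2 * β * n)) * x)
        = (-β / (2*Real.sqrt 2)) * Real.log (2*(n:ℝ)) + Real.sqrt 2 * β * n + Real.log x := by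
      rw [Real.log_mul (by positivity) (ne_of_gt hx),
        Real.log_mul (by positivity) (Real.exp_ne_zero _), Real.log_rpow h2n, Real.log_exp]
    obtain ⟨s, hs_def⟩ : ∃ s, Real.sqrt (n:ℝ) = s := ⟨_, rfl⟩
    have hs0 : s ≠ 0 := by rw [← hs_def]; positivity
    have hss : s * s = (n:ℝ) := by rw [← hs_def]; exact Real.mul_self_sqrt hn0.le
    simp only [htdef, hcdef, hlog, hs_def]
    rw [← hss]
    field_simp
    ring
  -- the set identity
  have hset : ∀ n : ℕ, 1 ≤ n →
      {y : ℝ | Real.exp (β * Real.sqrt n * y) >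
        ((2 * (n:ℝ)) ^ (-β / (2 * Real.sqrt 2)) * Real.exp (Real.sqrt 2 * β * n)) * x}
      = Set.Ioi (t n) := by
    intro n hn
    have hn0 : (0:ℝ) < (n:ℝ) := by exact_mod_cast hn
    have hsn : (0:ℝ) < Real.sqrt n := Real.sqrt_pos.mpr hn0
    have ha : (0:ℝ) < β * Real.sqrt n := by positivity
    have hM : (0:ℝ) < ((2 * (n:ℝ)) ^ (-β / (2 * Real.sqrt 2))
        * Real.exp (Real.sqrt 2 * β * n)) * x := by positivity
    ext y
    simp only [Set.mem_setOf_eq, Set.mem_Ioi, gt_iff_lt]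
    rw [← Real.log_lt_iff_lt_exp hM, htdef]
    rw [div_lt_iff₀ ha]
    constructor <;> intro h <;> linarith [h]
  -- limits of c over various normalizations
  have hn2 : Tendsto (fun n : ℕ => (2*(n:ℝ))) atTop atTop :=
    (tendsto_natCast_atTop_atTop (R := ℝ)).const_mul_atTop (by norm_num)
  have hsn_top : Tendsto (fun n : ℕ => Real.sqrt n) atTop atTop :=
    sqrt_tendsto_atTop.comp (tendsto_natCast_atTop_atTop (R := ℝ))
  have hlogsqrt : Tendsto (fun y : ℝ => Real.log y / Real.sqrt y) atTop (nhds 0) := by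
    have h := (isLittleO_log_rpow_atTop (by norm_num : (0:ℝ) < 1/2)).tendsto_div_nhds_zero
    refine h.congr' ?_
    filter_upwards [eventually_ge_atTop (0:ℝ)] with y hy
    rw [Real.sqrt_eq_rpow]
  have hc2 : Tendsto (fun n : ℕ => c n / Real.sqrt (2*(n:ℝ))) atTop (nhds 0) := by
    have hG : Tendsto (fun y : ℝ => (Real.log x / β) / Real.sqrt y
        - (2*Real.sqrt 2)⁻¹ * (Real.log y / Real.sqrt y)) atTop (nhds 0) := by
      have h1 : Tendsto (fun y : ℝ => (Real.log x / β) / Real.sqrt y) atTop (nhds 0) :=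
        tendsto_const_nhds.div_atTop sqrt_tendsto_atTop
      have h2 := hlogsqrt.const_mul ((2*Real.sqrt 2)⁻¹)
      simpa using h1.sub h2
    have := hG.comp hn2
    refine this.congr ?_
    intro n
    simp only [Function.comp, hcdef]
    ring
  have hL1 : Tendsto (fun n : ℕ => c n / Real.sqrt n) atTop (nhds 0) := by
    have := hc2.const_mul (Real.sqrt 2)
    rw [mul_zero] at this
    refine this.congr' ?_
    filter_upwards [eventually_ge_atTop 1] with n hn
    have hn0 : (0:ℝ) < (n:ℝ) := by exact_mod_cast hn
    have hsn : (0:ℝ) < Real.sqrt n := Real.sqrt_pos.mpr hn0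
    rw [Real.sqrt_mul (by norm_num : (0:ℝ) ≤ 2)]
    field_simp
  have hL2 : Tendsto (fun n : ℕ => (c n)^2 / (2*(n:ℝ))) atTop (nhds 0) := by
    have := hc2.mul hc2
    rw [mul_zero] at this
    refine this.congr' ?_
    filter_upwards [eventually_ge_atTop 1] with n hn
    have hn0 : (0:ℝ) < (n:ℝ) := by exact_mod_cast hn
    have h2n : (0:ℝ) ≤ 2*(n:ℝ) := by positivity
    rw [div_mul_div_comm, ← pow_two, ← pow_two, Real.sq_sqrt h2n]
  have hL3 : Tendsto (fun n : ℕ => c n / (Real.sqrt 2 * (n:ℝ))) atTop (nhds 0) := by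
    have := hc2.mul hsn_top.inv_tendsto_atTop
    rw [mul_zero] at this
    refine this.congr' ?_
    filter_upwards [eventually_ge_atTop 1] with n hn
    have hn0 : (0:ℝ) < (n:ℝ) := by exact_mod_cast hn
    have hss : Real.sqrt (n:ℝ) * Real.sqrt (n:ℝ) = (n:ℝ) := Real.mul_self_sqrt hn0.le
    have hkey2 : Real.sqrt (2*(n:ℝ)) * Real.sqrt (n:ℝ) = Real.sqrt 2 * (n:ℝ) := by
      rw [Real.sqrt_mul (by norm_num : (0:ℝ) ≤ 2), mul_assoc, hss]
    rw [← hkey2, div_mul_eq_div_div]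
    simp [div_eq_mul_inv]
  -- t tends to infinity
  have htop : Tendsto t atTop atTop := by
    have h1 : Tendsto (fun n : ℕ => Real.sqrt 2 * Real.sqrt n) atTop atTop :=
      hsn_top.const_mul_atTop hr2
    have := hL1.add_atTop h1
    refine this.congr' ?_
    filter_upwards [eventually_ge_atTop 1] with n hn
    rw [htT n hn]
    ring
  have hpos : ∀ᶠ n : ℕ in atTop, 0 < t n := htop.eventually_gt_atTop 0
  -- key exponent identity
  have hkey : ∀ n : ℕ, 1 ≤ n → Real.exp (-(t n)^2/2)
      = Real.exp (-(n:ℝ)) * (Real.sqrt 2 * Real.sqrt n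
          * (x ^ (-Real.sqrt 2/β) * Real.exp (-((c n)^2/(2*(n:ℝ)))))) := by
    intro n hn
    have hn0 : (0:ℝ) < (n:ℝ) := by exact_mod_cast hn
    have hsn2 : Real.sqrt 2 * Real.sqrt (n:ℝ) = Real.sqrt (2*(n:ℝ)) :=
      (Real.sqrt_mul (by norm_num) _).symm
    have hs2n : (0:ℝ) < Real.sqrt (2*(n:ℝ)) := Real.sqrt_pos.mpr (by positivity)
    have hlog2n : Real.log (Real.sqrt (2*(n:ℝ))) = Real.log (2*(n:ℝ)) / 2 :=
      Real.log_sqrt (by positivity)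
    rw [hsn2, ← Real.exp_log hs2n, Real.rpow_def_of_pos hx, ← Real.exp_add, ← Real.exp_add,
      ← Real.exp_add, hlog2n, htT n hn]
    congr 1
    simp only [hcdef]
    obtain ⟨s, hs_def⟩ : ∃ s, Real.sqrt (n:ℝ) = s := ⟨_, rfl⟩
    have hs0 : s ≠ 0 := by
      rw [← hs_def]; exact ne_of_gt (Real.sqrt_pos.mpr hn0)
    have hss : s * s = (n:ℝ) := by rw [← hs_def]; exact Real.mul_self_sqrt hn0.le
    rw [hs_def]
    exact exponent_identity (Real.sqrt 2) s (Real.log x) (Real.log (2*(n:ℝ))) β (n:ℝ)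
      h22 hss hs0 (ne_of_gt hr2) hβ'
  -- floor ratio tends to 1
  have hD : Tendsto (fun n : ℕ => (⌊Real.exp n⌋:ℝ)/Real.exp n) atTop (nhds 1) := by
    have hlow : Tendsto (fun n : ℕ => 1 - Real.exp (-(n:ℝ))) atTop (nhds 1) := by
      have h0 : Tendsto (fun n : ℕ => Real.exp (-(n:ℝ))) atTop (nhds 0) :=
        Real.tendsto_exp_neg_atTop_nhds_zero.comp (tendsto_natCast_atTop_atTop (R := ℝ))
      simpa using tendsto_const_nhds.sub h0
    refine tendsto_of_tendsto_of_tendsto_of_le_of_le hlow tendsto_const_nhds ?_ ?_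
    · intro n
      have hpos : (0:ℝ) < Real.exp n := Real.exp_pos _
      rw [le_div_iff₀ hpos, sub_mul, one_mul, ← Real.exp_add]
      simp only [neg_add_cancel, Real.exp_zero]
      linarith [Int.sub_one_lt_floor (Real.exp (n:ℝ))]
    · intro n
      have hpos : (0:ℝ) < Real.exp n := Real.exp_pos _
      rw [div_le_one hpos]
      exact Int.floor_le _
  -- ratio tends to 1
  have hW : Tendsto (fun n : ℕ => Real.sqrt 2 * Real.sqrt n / t n) atTop (nhds 1) := by
    have hden : Tendsto (fun n : ℕ => 1 + c n/(Real.sqrt 2 * (n:ℝ))) atTop (nhds 1) := by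
      have h := (tendsto_const_nhds (x := (1:ℝ)) (f := atTop)).add hL3
      simpa only [add_zero] using h
    have hinv := hden.inv₀ one_ne_zero
    rw [inv_one] at hinv
    refine hinv.congr' ?_
    filter_upwards [eventually_ge_atTop 1] with n hn
    have hn0 : (0:ℝ) < (n:ℝ) := by exact_mod_cast hn
    have hsn : (0:ℝ) < Real.sqrt n := Real.sqrt_pos.mpr hn0
    have hfac : t n = (Real.sqrt 2 * Real.sqrt n) * (1 + c n/(Real.sqrt 2 * (n:ℝ))) := by
      rw [htT n hn]
      obtain ⟨s, hs_def⟩ : ∃ s, Real.sqrt (n:ℝ) = s := ⟨_, rfl⟩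
      have hs0 : s ≠ 0 := by rw [← hs_def]; positivity
      have hss : s * s = (n:ℝ) := by rw [← hs_def]; exact Real.mul_self_sqrt hn0.le
      rw [hs_def, ← hss]
      field_simp
    rw [hfac, div_mul_cancel_left₀ (ne_of_gt (by positivity : (0:ℝ) < Real.sqrt 2 * Real.sqrt n))]
  -- exp correction tends to 1
  have hA : Tendsto (fun n : ℕ => Real.exp (-((c n)^2/(2*(n:ℝ))))) atTop (nhds 1) := by
    have h0 : Tendsto (fun n : ℕ => -((c n)^2/(2*(n:ℝ)))) atTop (nhds 0) := by
      simpa using hL2.neg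
    have := (Real.continuous_exp.tendsto 0).comp h0
    simpa [Function.comp_def] using this
  -- upper envelope limit
  have hU : Tendsto (fun n : ℕ => (⌊Real.exp n⌋:ℝ)
      * ((Real.sqrt (2*Real.pi))⁻¹ * (Real.exp (-(t n)^2/2) / t n))) atTop
      (nhds ((1 / Real.sqrt (2 * Real.pi)) * x ^ (-Real.sqrt 2 / β))) := by
    have h1 := (hD.mul_const ((Real.sqrt (2*Real.pi))⁻¹ * x ^ (-Real.sqrt 2/β))).mul (hA.mul hW)
    rw [show (1:ℝ) * ((Real.sqrt (2*Real.pi))⁻¹ * x ^ (-Real.sqrt 2/β)) * (1*1)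
        = (1/Real.sqrt (2*Real.pi)) * x ^ (-Real.sqrt 2/β) by
      rw [one_div]; ring] at h1
    refine h1.congr' ?_
    filter_upwards [eventually_ge_atTop 1] with n hn
    rw [hkey n hn]
    simp only [Real.exp_neg]
    ring
  -- lower envelope limit
  have hB : Tendsto (fun n : ℕ => (t n)^2/(1+(t n)^2)) atTop (nhds 1) := by
    have hg1 : Tendsto (fun u : ℝ => u^2/(1+u^2)) atTop (nhds 1) := by
      have hd : Tendsto (fun u : ℝ => 1+u^2) atTop atTop :=
        tendsto_atTop_add_const_left _ 1 (tendsto_pow_atTop two_ne_zero)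
      have h0 : Tendsto (fun u : ℝ => 1/(1+u^2)) atTop (nhds 0) :=
        tendsto_const_nhds.div_atTop hd
      have h1 := (tendsto_const_nhds (x := (1:ℝ)) (f := atTop)).sub h0
      rw [sub_zero] at h1
      refine h1.congr ?_
      intro u
      have hu : (0:ℝ) < 1 + u^2 := by positivity
      field_simp
      ring
    exact hg1.comp htop
  have hLo : Tendsto (fun n : ℕ => (⌊Real.exp n⌋:ℝ)
      * ((Real.sqrt (2*Real.pi))⁻¹ * (t n/(1+(t n)^2) * Real.exp (-(t n)^2/2)))) atTop
      (nhds ((1 / Real.sqrt (2 * Real.pi)) * x ^ (-Real.sqrt 2 / β))) := by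
    have h1 := hU.mul hB
    rw [mul_one] at h1
    refine h1.congr' ?_
    filter_upwards [hpos] with n htn
    have h1t : (0:ℝ) < 1 + (t n)^2 := by positivity
    field_simp
  -- squeeze
  refine tendsto_of_tendsto_of_tendsto_of_le_of_le' hLo hU ?_ ?_
  · filter_upwards [eventually_ge_atTop 1, hpos] with n hn htn
    rw [hset n hn, gauss_Ioi]
    have hfl : (0:ℝ) ≤ (⌊Real.exp n⌋:ℝ) := by
      have := Int.floor_nonneg.mpr (Real.exp_pos ((n:ℕ):ℝ)).le
      exact_mod_cast this
    exact mul_le_mul_of_nonneg_left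
      (mul_le_mul_of_nonneg_left (tail_lower (t n) htn) (by positivity)) hfl
  · filter_upwards [eventually_ge_atTop 1, hpos] with n hn htn
    rw [hset n hn, gauss_Ioi]
    have hfl : (0:ℝ) ≤ (⌊Real.exp n⌋:ℝ) := by
      have := Int.floor_nonneg.mpr (Real.exp_pos ((n:ℕ):ℝ)).le
      exact_mod_cast this
    exact mul_le_mul_of_nonneg_left
      (mul_le_mul_of_nonneg_left (tail_upper (t n) htn) (by positivity)) hfl
end

section
/- Fix a ∈ ℝ, σ > 0, β > 0 with a + √2·σ − 2β > 0. Define γ_n = exp(βan)·(2n)^{−βσ/(2√2)}·exp(√2·βσ·n) and J_n(2,τ) = ⌊e^n⌋·∫_0^τ x² dμ_n(x), where μ_n is the law of exp(β√n·ξ)/γ_n with ξ standard normal. Then (1/n)·log J_n(2,τ) → 2β² − 2(a+√2σ)β + 1 as n → ∞, for every τ > 0. -/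
open MeasureTheory ProbabilityTheory Filter Real

noncomputable def Phi (t : ℝ) : ℝ := (gaussianReal 0 1 (Set.Iic t)).toReal

lemma Phi_pos (t : ℝ) : 0 < Phi t := by
  refine ENNReal.toReal_pos (fun h0 => ?_) (measure_ne_top _ _)
  have := (gaussianReal_absolutelyContinuous' 0 one_ne_zero) h0
  simp [Real.volume_Iic] at this

lemma Phi_tendsto : Tendsto Phi atTop (nhds 1) := by
  have h := tendsto_measure_Iic_atTop (gaussianReal 0 1)
  rw [measure_univ] at h
  exact (ENNReal.tendsto_toReal ENNReal.one_ne_top).comp h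

lemma setIntegral_gaussianReal (g : ℝ → ℝ) {s : Set ℝ} (hs : MeasurableSet s) :
    ∫ y in s, g y ∂(gaussianReal 0 1) = ∫ y in s, gaussianPDFReal 0 1 y * g y := by
  rw [gaussianReal_of_var_ne_zero 0 one_ne_zero, gaussianPDF_def]
  rw [show (fun x => ENNReal.ofReal (gaussianPDFReal 0 1 x))
      = (fun x => ((gaussianPDFReal 0 1 x).toNNReal : ENNReal)) from rfl]
  rw [setIntegral_withDensity_eq_setIntegral_smul
    ((measurable_gaussianPDFReal 0 1).real_toNNReal) g hs]
  refine setIntegral_congr_fun hs fun x _ => ?_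
  simp [NNReal.smul_def, Real.coe_toNNReal _ (gaussianPDFReal_nonneg 0 1 x)]

lemma gauss_integral_exp_Iic (c t : ℝ) :
    ∫ y in Set.Iic t, Real.exp (c * y) ∂(gaussianReal 0 1)
      = Real.exp (c ^ 2 / 2) * Phi (t - c) := by
  rw [setIntegral_gaussianReal _ measurableSet_Iic]
  have key : ∀ y : ℝ, gaussianPDFReal 0 1 y * Real.exp (c * y)
      = Real.exp (c ^ 2 / 2) * gaussianPDFReal 0 1 (y - c) := by
    intro y
    simp only [gaussianPDFReal, NNReal.coe_one, mul_one, sub_zero]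
    rw [mul_assoc, ← Real.exp_add, ← mul_assoc, mul_comm (Real.exp (c ^ 2 / 2)), mul_assoc,
      ← Real.exp_add]
    congr 1
    ring
  simp_rw [key]
  rw [MeasureTheory.integral_const_mul]
  congr 1
  have h1 : ∫ y in Set.Iic t, gaussianPDFReal 0 1 (y - c)
      = ∫ y in Set.Iic (t - c), gaussianPDFReal 0 1 y := by
    rw [← integral_indicator measurableSet_Iic, ← integral_indicator measurableSet_Iic]
    have hind : ∀ y : ℝ, (Set.Iic t).indicator (fun y => gaussianPDFReal 0 1 (y - c)) y
        = (Set.Iic (t - c)).indicator (gaussianPDFReal 0 1) (y - c) := by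
      intro y
      by_cases hy : y ≤ t
      · rw [Set.indicator_of_mem (Set.mem_Iic.mpr hy),
          Set.indicator_of_mem (Set.mem_Iic.mpr (by linarith))]
      · rw [Set.indicator_of_notMem (by simpa using hy),
          Set.indicator_of_notMem (by simp only [Set.mem_Iic]; intro hc; exact hy (by linarith))]
    simp_rw [hind]
    exact integral_sub_right_eq_self ((Set.Iic (t - c)).indicator (gaussianPDFReal 0 1)) c
  rw [h1, Phi, gaussianReal_apply_eq_integral 0 one_ne_zero,
    ENNReal.toReal_ofReal (integral_nonneg fun x => gaussianPDFReal_nonneg _ _ _)]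

lemma tendsto_log2n : Tendsto (fun n : ℕ => Real.log (2 * n) / n) atTop (nhds 0) := by
  have l1 : Tendsto (fun x : ℝ => Real.log x / x) atTop (nhds 0) := by
    simpa using Real.tendsto_pow_log_div_mul_add_atTop 1 0 1 one_ne_zero
  have l2 : Tendsto (fun n : ℕ => (2 * (n : ℝ))) atTop atTop :=
    (tendsto_natCast_atTop_atTop (R := ℝ)).const_mul_atTop two_pos
  have l3 := (l1.comp l2).const_mul 2
  rw [mul_zero] at l3
  refine Tendsto.congr' ?_ l3
  filter_upwards [eventually_ge_atTop 1] with n hn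
  have hn0 : (n : ℝ) ≠ 0 := Nat.cast_ne_zero.mpr (by omega)
  simp only [Function.comp]
  field_simp

lemma tendsto_log_floor_exp :
    Tendsto (fun n : ℕ => 1 / (n : ℝ) * Real.log (⌊Real.exp n⌋ : ℤ)) atTop (nhds 1) := by
  have hlow : Tendsto (fun n : ℕ => 1 - 1 / (n : ℝ) * Real.log 2) atTop (nhds 1) := by
    have := tendsto_one_div_atTop_nhds_zero_nat.mul_const (Real.log 2)
    rw [zero_mul] at this
    simpa using (tendsto_const_nhds (x := (1:ℝ))).sub this
  refine tendsto_of_tendsto_of_tendsto_of_le_of_le' hlow tendsto_const_nhds ?_ ?_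
  · filter_upwards [eventually_ge_atTop 1] with n hn
    have hn1 : (1 : ℝ) ≤ n := by exact_mod_cast hn
    have hexp2 : (2 : ℝ) ≤ Real.exp n := by
      calc (2:ℝ) = 1 + 1 := by norm_num
      _ ≤ Real.exp 1 := Real.add_one_le_exp 1
      _ ≤ Real.exp n := Real.exp_le_exp.mpr hn1
    have hfl : Real.exp n / 2 ≤ (⌊Real.exp n⌋ : ℝ) := by
      have := Int.sub_one_lt_floor (Real.exp n)
      linarith
    have hpos : (0 : ℝ) < Real.exp n / 2 := by positivity
    have hlog : Real.log (Real.exp n / 2) ≤ Real.log (⌊Real.exp n⌋ : ℝ) :=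
      Real.log_le_log hpos hfl
    rw [Real.log_div (Real.exp_ne_zero _) two_ne_zero, Real.log_exp] at hlog
    have hn0 : (0 : ℝ) < n := by linarith
    have e1 : 1 - 1 / (n : ℝ) * Real.log 2 = ((n : ℝ) - Real.log 2) / n := by field_simp
    have e2 : 1 / (n : ℝ) * Real.log (⌊Real.exp n⌋ : ℝ) = Real.log (⌊Real.exp n⌋ : ℝ) / n := by
      ring
    rw [e1, e2]
    gcongr
  · filter_upwards [eventually_ge_atTop 1] with n hn
    have hn1 : (1 : ℝ) ≤ n := by exact_mod_cast hn
    have hn0 : (0 : ℝ) < n := by linarith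
    have hfl : (⌊Real.exp n⌋ : ℝ) ≤ Real.exp n := Int.floor_le _
    have h1 : (1 : ℝ) ≤ (⌊Real.exp n⌋ : ℝ) := by
      exact_mod_cast Int.le_floor.mpr (by simpa using Real.one_le_exp (by positivity : (0:ℝ) ≤ n))
    have hlog : Real.log (⌊Real.exp n⌋ : ℝ) ≤ n := by
      calc Real.log (⌊Real.exp n⌋ : ℝ) ≤ Real.log (Real.exp n) := Real.log_le_log (by linarith) hfl
      _ = n := Real.log_exp _
    rw [one_div, inv_mul_le_iff₀ hn0]
    nlinarith

noncomputable def Gam (a σ β : ℝ) (n : ℕ) : ℝ :=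
  Real.exp (β * a * n) * (2 * n : ℝ) ^ (-(β * σ) / (2 * Real.sqrt 2))
    * Real.exp (Real.sqrt 2 * (β * σ) * n)

lemma Gam_def (a σ β : ℝ) (n : ℕ) : Gam a σ β n =
    Real.exp (β * a * n) * (2 * n : ℝ) ^ (-(β * σ) / (2 * Real.sqrt 2))
      * Real.exp (Real.sqrt 2 * (β * σ) * n) := rfl

noncomputable def Sn (a σ β τ : ℝ) (n : ℕ) : ℝ :=
  Real.log (τ * Gam a σ β n) / (β * Real.sqrt n) - 2 * β * Real.sqrt n

lemma Gam_pos (a σ β : ℝ) {n : ℕ} (hn : 1 ≤ n) : 0 < Gam a σ β n := by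
  have h2n : (0 : ℝ) < 2 * n := by
    have : (0:ℝ) < n := by exact_mod_cast hn
    linarith
  exact mul_pos (mul_pos (Real.exp_pos _) (Real.rpow_pos_of_pos h2n _)) (Real.exp_pos _)

lemma log_Gam (a σ β : ℝ) {n : ℕ} (hn : 1 ≤ n) :
    Real.log (Gam a σ β n)
      = β * a * n + (-(β * σ) / (2 * Real.sqrt 2)) * Real.log (2 * n)
        + Real.sqrt 2 * (β * σ) * n := by
  have h2n : (0 : ℝ) < 2 * n := by
    have : (0:ℝ) < n := by exact_mod_cast hn
    linarith
  rw [Gam_def, Real.log_mul (by positivity) (Real.exp_ne_zero _),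
    Real.log_mul (Real.exp_ne_zero _) (ne_of_gt (Real.rpow_pos_of_pos h2n _)),
    Real.log_exp, Real.log_exp, Real.log_rpow h2n]

lemma log_Gam_div_tendsto (a σ β : ℝ) :
    Tendsto (fun n : ℕ => Real.log (Gam a σ β n) / n) atTop
      (nhds (β * a + Real.sqrt 2 * (β * σ))) := by
  have h2' : Tendsto (fun n : ℕ => β * a
      + (-(β * σ) / (2 * Real.sqrt 2)) * (Real.log (2 * n) / n)
      + Real.sqrt 2 * (β * σ)) atTop
      (nhds (β * a + (-(β * σ) / (2 * Real.sqrt 2)) * 0 + Real.sqrt 2 * (β * σ))) :=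
    (tendsto_const_nhds.add (tendsto_log2n.const_mul _)).add tendsto_const_nhds
  rw [mul_zero, add_zero] at h2'
  refine Tendsto.congr' ?_ h2'
  filter_upwards [eventually_ge_atTop 1] with n hn
  have hn0 : (n : ℝ) ≠ 0 := Nat.cast_ne_zero.mpr (by omega)
  rw [log_Gam a σ β hn]
  field_simp

lemma sqrt_nat_tendsto : Tendsto (fun n : ℕ => Real.sqrt n) atTop atTop := by
  have h1 : Tendsto (fun x : ℝ => x ^ (1/2 : ℝ)) atTop atTop := tendsto_rpow_atTop (by norm_num)
  refine (h1.comp tendsto_natCast_atTop_atTop).congr fun n => ?_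
  simp [Function.comp, Real.sqrt_eq_rpow]

lemma Sn_tendsto (a σ β τ : ℝ) (hβ : 0 < β) (hτ : 0 < τ)
    (h : 0 < a + Real.sqrt 2 * σ - 2 * β) :
    Tendsto (Sn a σ β τ) atTop atTop := by
  have hE : Tendsto (fun n : ℕ => (a + Real.sqrt 2 * σ - 2 * β)
      + (Real.log τ + (-(β * σ) / (2 * Real.sqrt 2)) * Real.log (2 * n)) / (β * n)) atTop
      (nhds (a + Real.sqrt 2 * σ - 2 * β)) := by
    have t2 : Tendsto (fun n : ℕ => (1 / β) * (Real.log τ * (1 / (n : ℝ)))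
        + ((-(β * σ) / (2 * Real.sqrt 2)) / β) * (Real.log (2 * n) / n)) atTop (nhds 0) := by
      have u1 := (tendsto_one_div_atTop_nhds_zero_nat.const_mul (Real.log τ)).const_mul (1 / β)
      have u2 := tendsto_log2n.const_mul ((-(β * σ) / (2 * Real.sqrt 2)) / β)
      simpa using u1.add u2
    have t1 : Tendsto (fun n : ℕ =>
        (Real.log τ + (-(β * σ) / (2 * Real.sqrt 2)) * Real.log (2 * n)) / (β * n)) atTop
        (nhds 0) := by
      refine Tendsto.congr' ?_ t2
      filter_upwards [eventually_ge_atTop 1] with n hn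
      have hn0 : (n : ℝ) ≠ 0 := Nat.cast_ne_zero.mpr (by omega)
      field_simp
    simpa using tendsto_const_nhds.add t1
  have hmul := Tendsto.atTop_mul_pos h sqrt_nat_tendsto hE
  refine Tendsto.congr' ?_ hmul
  filter_upwards [eventually_ge_atTop 1] with n hn
  have hnpos : (0 : ℝ) < n := by exact_mod_cast Nat.pos_of_ne_zero (by omega)
  have hs : 0 < Real.sqrt n := Real.sqrt_pos.mpr hnpos
  rw [Sn, Real.log_mul hτ.ne' (Gam_pos a σ β hn).ne', log_Gam a σ β hn]
  set s := Real.sqrt (n : ℝ) with hsdef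
  have hss : (n : ℝ) = s * s := (Real.mul_self_sqrt hnpos.le).symm
  rw [hss]
  field_simp
  ring

lemma integral_formula (β s γ τ : ℝ) (hβ : 0 < β) (hs : 0 < s) (hγ : 0 < γ) (hτ : 0 < τ) :
    ∫ x in Set.Ioc (0 : ℝ) τ, x ^ 2
        ∂(Measure.map (fun y => Real.exp (β * s * y) / γ) (gaussianReal 0 1))
      = (γ ^ 2)⁻¹ * (Real.exp ((2 * β * s) ^ 2 / 2)
          * Phi (Real.log (τ * γ) / (β * s) - 2 * β * s)) := by
  have hβs : 0 < β * s := mul_pos hβ hs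
  have hmeas : AEMeasurable (fun y => Real.exp (β * s * y) / γ) (gaussianReal 0 1) :=
    (((Real.continuous_exp.comp (continuous_const.mul continuous_id)).div_const γ)).aemeasurable
  rw [setIntegral_map measurableSet_Ioc (continuous_pow 2).aestronglyMeasurable hmeas]
  have hpre : (fun y => Real.exp (β * s * y) / γ) ⁻¹' (Set.Ioc 0 τ)
      = Set.Iic (Real.log (τ * γ) / (β * s)) := by
    ext y
    simp only [Set.mem_preimage, Set.mem_Ioc, Set.mem_Iic]
    rw [and_iff_right (div_pos (Real.exp_pos _) hγ)]
    rw [div_le_iff₀ hγ, ← Real.le_log_iff_exp_le (mul_pos hτ hγ), ← le_div_iff₀' hβs]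
  rw [hpre]
  have hsq : ∀ y : ℝ, (Real.exp (β * s * y) / γ) ^ 2
      = (γ ^ 2)⁻¹ * Real.exp ((2 * β * s) * y) := by
    intro y
    rw [div_pow, pow_two, ← Real.exp_add, div_eq_mul_inv]
    have harg : β * s * y + β * s * y = (2 * β * s) * y := by ring
    rw [harg, mul_comm]
  simp_rw [hsq]
  rw [MeasureTheory.integral_const_mul, gauss_integral_exp_Iic]


/-- Exponential growth rate of the truncated second moment `J_n(2,τ)` in the regime
`a + √2σ − 2β > 0`: `(1/n)·log J_n(2,τ) → 2β² − 2(a+√2σ)β + 1`. -/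
theorem truncated_second_moment_rate (a σ β : ℝ) (hσ : 0 < σ) (hβ : 0 < β)
    (h : a + Real.sqrt 2 * σ - 2 * β > 0) (τ : ℝ) (hτ : 0 < τ) :
    Tendsto (fun n : ℕ =>
        (1 / (n : ℝ)) * Real.log
          ((⌊Real.exp n⌋ : ℝ) *
            ∫ x in Set.Ioc (0 : ℝ) τ, x ^ 2
              ∂(Measure.map
                  (fun y => Real.exp (β * Real.sqrt n * y) /
                    (Real.exp (β * a * n) * (2 * n : ℝ) ^ (-(β * σ) / (2 * Real.sqrt 2))
                      * Real.exp (Real.sqrt 2 * (β * σ) * n)))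
                  (gaussianReal 0 1))))
      atTop
      (nhds (2 * β ^ 2 - 2 * (a + Real.sqrt 2 * σ) * β + 1)) := by
  have hS := Sn_tendsto a σ β τ hβ hτ h
  have hPhi1 : Tendsto (fun n : ℕ => Phi (Sn a σ β τ n)) atTop (nhds 1) := Phi_tendsto.comp hS
  have hlogPhi : Tendsto (fun n : ℕ => Real.log (Phi (Sn a σ β τ n))) atTop (nhds 0) := by
    have := (Real.continuousAt_log one_ne_zero).tendsto.comp hPhi1
    simpa [Function.comp_def] using this
  have h3 : Tendsto (fun n : ℕ => 1 / (n : ℝ) * Real.log (Phi (Sn a σ β τ n))) atTop (nhds 0) := by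
    have := tendsto_one_div_atTop_nhds_zero_nat.mul hlogPhi
    simpa using this
  have hL : Tendsto (fun n : ℕ => 1 / (n : ℝ) * Real.log (⌊Real.exp n⌋ : ℤ) + 2 * β ^ 2
      - 2 * (Real.log (Gam a σ β n) / n) + 1 / (n : ℝ) * Real.log (Phi (Sn a σ β τ n))) atTop
      (nhds (1 + 2 * β ^ 2 - 2 * (β * a + Real.sqrt 2 * (β * σ)) + 0)) :=
    ((tendsto_log_floor_exp.add tendsto_const_nhds).sub
      ((log_Gam_div_tendsto a σ β).const_mul 2)).add h3
  rw [show (2 * β ^ 2 - 2 * (a + Real.sqrt 2 * σ) * β + 1)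
      = (1 + 2 * β ^ 2 - 2 * (β * a + Real.sqrt 2 * (β * σ)) + 0) from by ring]
  refine Tendsto.congr' ?_ hL
  filter_upwards [eventually_ge_atTop 1] with n hn
  have hnpos : (0 : ℝ) < n := by exact_mod_cast Nat.pos_of_ne_zero (by omega)
  have hn0 : (n : ℝ) ≠ 0 := hnpos.ne'
  have hs : 0 < Real.sqrt n := Real.sqrt_pos.mpr hnpos
  have hG : 0 < Gam a σ β n := Gam_pos a σ β hn
  rw [← Gam_def a σ β n, integral_formula β (Real.sqrt n) (Gam a σ β n) τ hβ hs hG hτ]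
  have hexp2 : ((2 * β * Real.sqrt n) ^ 2 / 2) = 2 * β ^ 2 * n := by
    rw [mul_pow, mul_pow, Real.sq_sqrt hnpos.le]
    ring
  rw [hexp2, ← Sn]
  have hF : (1 : ℝ) ≤ (⌊Real.exp n⌋ : ℝ) := by
    exact_mod_cast Int.le_floor.mpr (by simpa using Real.one_le_exp (by positivity : (0:ℝ) ≤ n))
  have hF0 : (0 : ℝ) < (⌊Real.exp n⌋ : ℝ) := lt_of_lt_of_le zero_lt_one hF
  have hPhiPos := Phi_pos (Sn a σ β τ n)
  rw [Real.log_mul hF0.ne' (by positivity),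
    Real.log_mul (by positivity) (by positivity),
    Real.log_mul (Real.exp_ne_zero _) hPhiPos.ne',
    Real.log_inv, Real.log_pow, Real.log_exp]
  push_cast
  field_simp
  ring
end
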